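/- With β(t) defined by cos 2β(t) = cos 2β(0)·e^{4(l-m-1)t} and T determined by cos 2β(0)·e^{4(l-m-1)T} = 1, the quantity sup|B|²(t) = 2m(l-m-1) + (l-m-1)(tan²β(t) + cot²β(t)) satisfies lim_{t→T} sup|B|²(t)·(T-t) = 1/2. In particular there is a constant C > 0 with sup|B|²(t) ≤ C/(T-t) for all t ∈ [0,T) (type I singularity). -/

import Mathlib

open Real Filter Set

set_option maxHeartbeats 1000000 in
/-- with `β(t)` defined by `cos 2β(t) = cos 2β(0)·e^{4(l-m-1)t}` and `T`
determined by `cos 2β(0)·e^{4(l-m-1)T} = 1`, the quantity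
`sup|B|²(t) = 2m(l-m-1) + (l-m-1)(tan²β(t) + cot²β(t))` satisfies
`lim_{t→T⁻} sup|B|²(t)·(T-t) = 1/2`; in particular there is a constant `C > 0` with
`sup|B|²(t) ≤ C/(T-t)` for all `t ∈ [0, T)` (type I singularity). -/
theorem statement13 (l m : ℕ) (hl : m + 2 ≤ l) (β : ℝ → ℝ) (T : ℝ)
    (hβ0 : β 0 ∈ Set.Ioo 0 (π / 4))
    (hT0 : 0 < T)
    (hrange : ∀ t < T, β t ∈ Set.Ioo 0 (π / 4))
    (hdef : ∀ t < T, Real.cos (2 * β t) =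
      Real.cos (2 * β 0) * Real.exp (4 * ((l : ℝ) - m - 1) * t))
    (hT : Real.cos (2 * β 0) * Real.exp (4 * ((l : ℝ) - m - 1) * T) = 1) :
    let supB : ℝ → ℝ := fun t => 2 * m * ((l : ℝ) - m - 1) +
      ((l : ℝ) - m - 1) * (Real.tan (β t) ^ 2 + Real.cot (β t) ^ 2)
    Filter.Tendsto (fun t => supB t * (T - t)) (nhdsWithin T (Set.Iio T))
        (nhds (1 / 2)) ∧
      ∃ C > 0, ∀ t ∈ Set.Ico 0 T, supB t ≤ C / (T - t) := by
  intro supB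
  set k : ℝ := (l : ℝ) - m - 1 with hk_def
  have hk1 : (1 : ℝ) ≤ k := by
    have hml : (m + 2 : ℝ) ≤ l := by exact_mod_cast hl
    rw [hk_def]; linarith
  have hkpos : (0 : ℝ) < k := by linarith
  set c : ℝ → ℝ := fun t => Real.exp (4 * k * (t - T)) with hc_def
  have hc0 : ∀ t, 0 < c t := fun t => Real.exp_pos _
  have hc1 : ∀ t < T, c t < 1 := by
    intro t ht
    have h : 4 * k * (t - T) < 0 := by nlinarith
    exact Real.exp_lt_one_iff.mpr h
  have hcos : ∀ t < T, Real.cos (2 * β t) = c t := by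
    intro t ht
    rw [hdef t ht]
    have h1 : Real.cos (2 * β 0) = Real.exp (-(4 * k * T)) := by
      rw [Real.exp_neg]
      exact eq_inv_of_mul_eq_one_left hT
    rw [h1, ← Real.exp_add, hc_def]
    ring_nf
  have hsin : ∀ t < T, Real.sin (β t) ^ 2 = (1 - c t) / 2 := by
    intro t ht
    rw [Real.sin_sq_eq_half_sub, hcos t ht]; ring
  have hcsq : ∀ t < T, Real.cos (β t) ^ 2 = (1 + c t) / 2 := by
    intro t ht
    rw [Real.cos_sq, hcos t ht]; ring
  have hsinpos : ∀ t < T, 0 < Real.sin (β t) := by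
    intro t ht
    obtain ⟨h1, h2⟩ := hrange t ht
    have hπ := Real.pi_pos
    exact Real.sin_pos_of_pos_of_lt_pi h1 (by linarith)
  have hcospos : ∀ t < T, 0 < Real.cos (β t) := by
    intro t ht
    obtain ⟨h1, h2⟩ := hrange t ht
    have hπ := Real.pi_pos
    exact Real.cos_pos_of_mem_Ioo ⟨by linarith, by linarith⟩
  have htan : ∀ t < T, Real.tan (β t) ^ 2 + Real.cot (β t) ^ 2 =
      (1 - c t) / (1 + c t) + (1 + c t) / (1 - c t) := by
    intro t ht
    have h1 := hsin t ht
    have h2 := hcsq t ht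
    have h3 := hsinpos t ht
    have h4 := hcospos t ht
    have h5 : (0 : ℝ) < 1 - c t := by linarith [hc1 t ht]
    have h6 : (0 : ℝ) < 1 + c t := by linarith [hc0 t]
    rw [Real.tan_eq_sin_div_cos, Real.cot_eq_cos_div_sin, div_pow, div_pow, h1, h2]
    field_simp
  have hsupB : ∀ t < T, supB t =
      2 * m * k + k * ((1 - c t) / (1 + c t) + (1 + c t) / (1 - c t)) := by
    intro t ht
    show 2 * m * k + k * (Real.tan (β t) ^ 2 + Real.cot (β t) ^ 2) = _
    rw [htan t ht]
  -- limits of c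
  have hccont : Continuous c := by
    rw [hc_def]; exact Real.continuous_exp.comp (by continuity)
  have hclim : Tendsto c (nhdsWithin T (Set.Iio T)) (nhds 1) := by
    have : c T = 1 := by simp [hc_def]
    have h := hccont.tendsto T
    rw [this] at h
    exact h.mono_left nhdsWithin_le_nhds
  -- Part A
  have hAlim : Tendsto (fun t => (2 * m * k + k * ((1 - c t) / (1 + c t))) * (T - t))
      (nhdsWithin T (Set.Iio T)) (nhds 0) := by
    have h1 : Tendsto (fun t => 2 * m * k + k * ((1 - c t) / (1 + c t)))
        (nhdsWithin T (Set.Iio T)) (nhds (2 * m * k + k * ((1 - 1) / (1 + 1)))) := by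
      exact tendsto_const_nhds.add (tendsto_const_nhds.mul
        (((tendsto_const_nhds.sub hclim)).div (tendsto_const_nhds.add hclim) (by norm_num)))
    have h2 : Tendsto (fun t : ℝ => T - t) (nhdsWithin T (Set.Iio T)) (nhds 0) := by
      rw [show (0:ℝ) = T - T by ring]
      exact (Filter.Tendsto.const_sub T tendsto_id).mono_left nhdsWithin_le_nhds
    have := h1.mul h2
    simpa using this
  -- the slope limit
  have hderiv : HasDerivAt (fun s : ℝ => 1 - Real.exp (-(4 * k) * s)) (4 * k) 0 := by
    have h1 : HasDerivAt (fun s : ℝ => -(4 * k) * s) (-(4 * k) * 1) 0 :=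
      (hasDerivAt_id (0 : ℝ)).const_mul (-(4 * k))
    have h2 := h1.exp
    have h3 := h2.const_sub 1
    exact h3.congr_deriv (by simp)
  have hslope := hasDerivAt_iff_tendsto_slope.mp hderiv
  have hG : Tendsto (fun s : ℝ => k * s / (1 - Real.exp (-(4 * k) * s)))
      (nhdsWithin 0 {(0 : ℝ)}ᶜ) (nhds (1 / 4)) := by
    have h4 : Tendsto (fun s : ℝ => k / slope (fun s : ℝ => 1 - Real.exp (-(4 * k) * s)) 0 s)
        (nhdsWithin 0 {(0 : ℝ)}ᶜ) (nhds (k / (4 * k))) :=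
      tendsto_const_nhds.div hslope (by positivity)
    have heq : ∀ s : ℝ, k / slope (fun s : ℝ => 1 - Real.exp (-(4 * k) * s)) 0 s =
        k * s / (1 - Real.exp (-(4 * k) * s)) := by
      intro s
      rw [slope_def_field]
      simp only [mul_zero, neg_zero, Real.exp_zero, sub_self, sub_zero, zero_mul]
      rw [div_div_eq_mul_div]
    have hval : k / (4 * k) = 1 / 4 := by
      rw [div_eq_div_iff (by positivity) (by norm_num : (4:ℝ) ≠ 0)]
      ring
    rw [hval] at h4
    exact Tendsto.congr heq h4
  have hcomp : Tendsto (fun t : ℝ => T - t) (nhdsWithin T (Set.Iio T))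
      (nhdsWithin 0 {(0 : ℝ)}ᶜ) := by
    rw [tendsto_nhdsWithin_iff]
    constructor
    · rw [show (0:ℝ) = T - T by ring]
      exact (Filter.Tendsto.const_sub T tendsto_id).mono_left nhdsWithin_le_nhds
    · filter_upwards [self_mem_nhdsWithin] with t ht
      simp only [Set.mem_compl_iff, Set.mem_singleton_iff]
      have : t < T := ht
      intro h; linarith [sub_eq_zero.mp h]
  have hBlim : Tendsto (fun t => (1 + c t) * (k * (T - t) / (1 - Real.exp (-(4 * k) * (T - t)))))
      (nhdsWithin T (Set.Iio T)) (nhds (1 / 2)) := by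
    have h1 : Tendsto (fun t => 1 + c t) (nhdsWithin T (Set.Iio T)) (nhds (1 + 1)) :=
      Filter.Tendsto.const_add 1 hclim
    have h2 := hG.comp hcomp
    have h3 := h1.mul h2
    have hv : (1 + 1 : ℝ) * (1 / 4) = 1 / 2 := by norm_num
    rw [hv] at h3
    exact h3
  -- main tendsto
  have hmain : Tendsto (fun t => supB t * (T - t)) (nhdsWithin T (Set.Iio T)) (nhds (1 / 2)) := by
    have hsum := hAlim.add hBlim
    rw [zero_add] at hsum
    refine Tendsto.congr' ?_ hsum
    filter_upwards [self_mem_nhdsWithin] with t ht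
    have ht' : t < T := ht
    rw [hsupB t ht']
    have hcc : Real.exp (-(4 * k) * (T - t)) = c t := by
      rw [hc_def]; ring_nf
    rw [hcc]
    have h5 : (0 : ℝ) < 1 - c t := by linarith [hc1 t ht']
    have h6 : (0 : ℝ) < 1 + c t := by linarith [hc0 t]
    field_simp
    ring
  refine ⟨hmain, ?_⟩
  -- bound part
  refine ⟨2 * m * k * T + k * T + (1 + 4 * k * T) / 2, by positivity, ?_⟩
  intro t ⟨ht0, htT⟩
  have hs : 0 < T - t := by linarith
  rw [le_div_iff₀ hs]
  rw [hsupB t htT]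
  have h5 : (0 : ℝ) < 1 - c t := by linarith [hc1 t htT]
  have h6 : (0 : ℝ) < 1 + c t := by linarith [hc0 t]
  have hsT : T - t ≤ T := by linarith
  have hcE : c t * Real.exp (4 * k * (T - t)) = 1 := by
    show Real.exp (4 * k * (t - T)) * Real.exp (4 * k * (T - t)) = 1
    rw [← Real.exp_add]
    have h0 : 4 * k * (t - T) + 4 * k * (T - t) = 0 := by ring
    rw [h0, Real.exp_zero]
  have hexp : 4 * k * (T - t) + 1 ≤ Real.exp (4 * k * (T - t)) := Real.add_one_le_exp _
  -- three bounds
  have b1 : 2 * m * k * (T - t) ≤ 2 * m * k * T := by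
    have : (0:ℝ) ≤ 2 * m * k := by positivity
    nlinarith
  have b2 : k * ((1 - c t) / (1 + c t)) * (T - t) ≤ k * T := by
    have hr : (1 - c t) / (1 + c t) ≤ 1 := by
      rw [div_le_one h6]; linarith [hc0 t]
    calc k * ((1 - c t) / (1 + c t)) * (T - t)
        = (1 - c t) / (1 + c t) * (k * (T - t)) := by ring
      _ ≤ 1 * (k * (T - t)) := by
          apply mul_le_mul_of_nonneg_right hr (by positivity)
      _ = k * (T - t) := one_mul _
      _ ≤ k * T := by nlinarith
  have b3 : k * ((1 + c t) / (1 - c t)) * (T - t) ≤ (1 + 4 * k * T) / 2 := by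
    rw [mul_comm (k) _, mul_assoc, div_mul_eq_mul_div, div_le_div_iff₀ h5 (by norm_num : (0:ℝ) < 2)]
    have hE1 : c t * (4 * k * (T - t) + 1) ≤ 1 := by
      calc c t * (4 * k * (T - t) + 1) ≤ c t * Real.exp (4 * k * (T - t)) := by
            apply mul_le_mul_of_nonneg_left hexp (hc0 t).le
        _ = 1 := hcE
    nlinarith [hc0 t, hc1 t htT, mul_nonneg (mul_nonneg hkpos.le hs.le) h5.le,
      mul_nonneg (sub_nonneg.mpr hsT) (mul_nonneg hkpos.le h5.le)]
  calc (2 * ↑m * k + k * ((1 - c t) / (1 + c t) + (1 + c t) / (1 - c t))) * (T - t)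
      = 2 * m * k * (T - t) + k * ((1 - c t) / (1 + c t)) * (T - t)
        + k * ((1 + c t) / (1 - c t)) * (T - t) := by ring
    _ ≤ 2 * m * k * T + k * T + (1 + 4 * k * T) / 2 :=
        add_le_add (add_le_add b1 b2) b3
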